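/- The matrix exponential of t(cos(u)m₂ + sin(u)m₅), where m₂ = E₃₂+E₂₃ and m₅ = i(E₃₂ - E₂₃) are the pseudo-Riemannian basis elements of su(2,1), equals the matrix F₅(t,u) with entries F₁₁ = 1, F₂₂ = cosh t, F₂₃ = e^{-iu} sinh t, F₃₂ = e^{iu} sinh t, F₃₃ = cosh t, and all other entries zero. -/

import Mathlib

set_option maxHeartbeats 1000000

open Matrix Complex

noncomputable section

/-- m₂ = E₃₂ + E₂₃ in su(2,1). -/
def m2 : Matrix (Fin 3) (Fin 3) ℂ := !![0, 0, 0; 0, 0, 1; 0, 1, 0]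

/-- m₅ = i(E₃₂ - E₂₃) in su(2,1). -/
def m5 : Matrix (Fin 3) (Fin 3) ℂ := !![0, 0, 0; 0, 0, -I; 0, I, 0]

lemma exp_aux (t : ℝ) (a : ℂ) (ha0 : a ≠ 0) :
    NormedSpace.exp (!![0,0,0; 0,0,(t:ℂ)*a⁻¹; 0,(t:ℂ)*a,0]) =
      !![1, 0, 0;
         0, (Real.cosh t : ℂ), a⁻¹ * Real.sinh t;
         0, a * Real.sinh t, (Real.cosh t : ℂ)] := by
  have hPQ : (!![1,0,0; 0,1,1; 0,a,-a] : Matrix (Fin 3) (Fin 3) ℂ) *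
      !![1,0,0; 0,(1:ℂ)/2, 1/(2*a); 0,1/2, -(1/(2*a))] = 1 := by
    ext i j
    fin_cases i <;> fin_cases j <;>
      simp [Matrix.mul_apply, Fin.sum_univ_succ, Matrix.vecHead, Matrix.vecTail] <;> field_simp <;> ring
  have hQP : (!![1,0,0; 0,(1:ℂ)/2, 1/(2*a); 0,1/2, -(1/(2*a))] : Matrix (Fin 3) (Fin 3) ℂ) *
      !![1,0,0; 0,1,1; 0,a,-a] = 1 := by
    ext i j
    fin_cases i <;> fin_cases j <;>
      simp [Matrix.mul_apply, Fin.sum_univ_succ, Matrix.vecHead, Matrix.vecTail] <;> field_simp <;> ring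
  set U : (Matrix (Fin 3) (Fin 3) ℂ)ˣ :=
    ⟨!![1,0,0; 0,1,1; 0,a,-a], !![1,0,0; 0,(1:ℂ)/2, 1/(2*a); 0,1/2, -(1/(2*a))], hPQ, hQP⟩
    with hU
  have hdiag : (diagonal ![0, (t:ℂ), -t]) = !![0,0,0; 0,(t:ℂ),0; 0,0,-t] := by
    ext i j
    fin_cases i <;> fin_cases j <;> simp [Matrix.diagonal_apply, Matrix.vecHead, Matrix.vecTail]
  have hexpdiag : NormedSpace.exp (diagonal ![0, (t:ℂ), -t])
      = !![1,0,0; 0,Complex.exp t,0; 0,0,Complex.exp (-t)] := by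
    rw [Matrix.exp_diagonal]
    ext i j
    fin_cases i <;> fin_cases j <;>
      simp [Matrix.diagonal_apply, Pi.exp_def, ← Complex.exp_eq_exp_ℂ, Matrix.vecHead, Matrix.vecTail]
  have key : (!![0,0,0; 0,0,(t:ℂ)*a⁻¹; 0,(t:ℂ)*a,0] : Matrix (Fin 3) (Fin 3) ℂ)
      = (U : Matrix (Fin 3) (Fin 3) ℂ) * (diagonal ![0, (t:ℂ), -t]) *
        ((U⁻¹ : (Matrix (Fin 3) (Fin 3) ℂ)ˣ) : Matrix (Fin 3) (Fin 3) ℂ) := by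
    rw [hdiag]
    show _ = !![1,0,0; 0,1,1; 0,a,-a] * _ * !![1,0,0; 0,(1:ℂ)/2, 1/(2*a); 0,1/2, -(1/(2*a))]
    ext i j
    fin_cases i <;> fin_cases j <;>
      simp [Matrix.mul_apply, Fin.sum_univ_succ, Matrix.vecHead, Matrix.vecTail] <;> field_simp <;> ring
  rw [key, Matrix.exp_units_conj, hexpdiag]
  show !![1,0,0; 0,1,1; 0,a,-a] * _ * !![1,0,0; 0,(1:ℂ)/2, 1/(2*a); 0,1/2, -(1/(2*a))] = _
  have hch : (Real.cosh t : ℂ) = (Complex.exp t + Complex.exp (-t)) / 2 := by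
    rw [Complex.ofReal_cosh, Complex.cosh]
  have hsh : (Real.sinh t : ℂ) = (Complex.exp t - Complex.exp (-t)) / 2 := by
    rw [Complex.ofReal_sinh, Complex.sinh]
  ext i j
  fin_cases i <;> fin_cases j <;>
    simp [Matrix.mul_apply, Fin.sum_univ_succ, Matrix.vecHead, Matrix.vecTail, hch, hsh] <;>
    field_simp <;> ring

/-- exp(t(cos u m₂ + sin u m₅)) equals the explicit matrix F₅(t,u). -/
theorem exp_F5 (t u : ℝ) :
    NormedSpace.exp
        ((t : ℂ) • ((Real.cos u : ℂ) • m2 + (Real.sin u : ℂ) • m5)) =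
      !![1, 0, 0;
         0, (Real.cosh t : ℂ), Complex.exp (-I * u) * Real.sinh t;
         0, Complex.exp (I * u) * Real.sinh t, (Real.cosh t : ℂ)] := by
  have ha0 : Complex.exp (I * u) ≠ 0 := Complex.exp_ne_zero _
  have hainv : (Complex.exp (I * u))⁻¹ = Complex.exp (-I * u) := by
    rw [← Complex.exp_neg]; ring_nf
  have hexp : Complex.exp (I * u) = Real.cos u + Real.sin u * I := by
    rw [mul_comm, Complex.exp_mul_I]
    push_cast
    ring
  have hexpneg : Complex.exp (-I * u) = Real.cos u - Real.sin u * I := by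
    rw [show -I * (u:ℂ) = (-(u:ℂ)) * I by ring, Complex.exp_mul_I,
      Complex.cos_neg, Complex.sin_neg]
    push_cast
    ring
  have harg : (t : ℂ) • ((Real.cos u : ℂ) • m2 + (Real.sin u : ℂ) • m5)
      = !![0,0,0; 0,0,(t:ℂ)*(Complex.exp (I * u))⁻¹; 0,(t:ℂ)*Complex.exp (I * u),0] := by
    rw [hainv, hexp, hexpneg]
    ext i j
    fin_cases i <;> fin_cases j <;>
      simp [m2, m5, Matrix.smul_apply, Matrix.add_apply, smul_eq_mul, Matrix.vecHead, Matrix.vecTail] <;> (first | ring1 | tauto)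
  rw [harg, exp_aux t _ ha0, hainv]

end
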